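/- For a nondegenerate continuum X, the following are equivalent: (1) every nondegenerate subcontinuum of X is a Wilder continuum; (2) every nondegenerate subcontinuum of X is a D*-continuum; (3) every nondegenerate subcontinuum of X is a D**-continuum; (4) every subcontinuum of X is arcwise connected. -/

import Mathlib

/-- A topological space is *Wilder* if for any three distinct points `x, y, z` there is a
compact connected subset containing `x` and exactly one of `y` and `z`. -/
def WilderSpace (X : Type*) [TopologicalSpace X] : Prop :=
  ∀ x y z : X, x ≠ y → y ≠ z → x ≠ z →
    ∃ C : Set X, IsCompact C ∧ IsConnected C ∧ x ∈ C ∧ Xor' (y ∈ C) (z ∈ C)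

/-- A topological space is a *D*-space* if for every pair of disjoint nondegenerate
subcontinua `A, B` there is a subcontinuum `C` meeting both `A` and `B` with
`A \ C ≠ ∅` and `B \ C ≠ ∅`. -/
def DStarSpace (X : Type*) [TopologicalSpace X] : Prop :=
  ∀ A B : Set X, IsCompact A → IsConnected A → A.Nontrivial →
    IsCompact B → IsConnected B → B.Nontrivial → Disjoint A B →
    ∃ C : Set X, IsCompact C ∧ IsConnected C ∧
      (A ∩ C).Nonempty ∧ (B ∩ C).Nonempty ∧ (A \ C).Nonempty ∧ (B \ C).Nonempty

/-- A topological space is a *D**-space* if for every pair of disjoint nondegenerate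
subcontinua `A, B` there is a subcontinuum `C` meeting both `A` and `B` with `B \ C ≠ ∅`. -/
def DStarStarSpace (X : Type*) [TopologicalSpace X] : Prop :=
  ∀ A B : Set X, IsCompact A → IsConnected A → A.Nontrivial →
    IsCompact B → IsConnected B → B.Nontrivial → Disjoint A B →
    ∃ C : Set X, IsCompact C ∧ IsConnected C ∧
      (A ∩ C).Nonempty ∧ (B ∩ C).Nonempty ∧ (B \ C).Nonempty

/-- A space is *arcwise connected* if any two distinct points are joined by an arc, i.e.
an injective continuous image of `[0,1]` with the two points as endpoints. -/
def ArcConnectedSpace (X : Type*) [TopologicalSpace X] : Prop :=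
  ∀ x y : X, x ≠ y →
    ∃ f : Set.Icc (0 : ℝ) 1 → X, Continuous f ∧ Function.Injective f ∧
      f ⟨0, le_refl 0, zero_le_one⟩ = x ∧ f ⟨1, zero_le_one, le_refl 1⟩ = y


open Set Topology Metric

namespace HWaux
section Seg0



variable {X : Type*}

lemma exists_clopen_of_component_subset [TopologicalSpace X] [T2Space X] [CompactSpace X]
    {x : X} {U : Set X} (hU : IsOpen U) (h : connectedComponent x ⊆ U) :
    ∃ Z : Set X, IsClopen Z ∧ x ∈ Z ∧ Z ⊆ U := by
  classical
  have hcc := connectedComponent_eq_iInter_isClopen x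
  have hempty : (Uᶜ ∩ ⋂ s : { s : Set X // IsClopen s ∧ x ∈ s }, (s : Set X)) = ∅ := by
    rw [← hcc, eq_empty_iff_forall_notMem]
    rintro z ⟨hz1, hz2⟩
    exact hz1 (h hz2)
  obtain ⟨t, ht⟩ := (hU.isClosed_compl.isCompact).elim_finite_subfamily_closed
    (fun s : { s : Set X // IsClopen s ∧ x ∈ s } => (s : Set X)) (fun s => s.2.1.1) hempty
  refine ⟨(⋂ s ∈ t, (s : Set X)) ∩ univ, ?_, ?_, ?_⟩
  · simp only [inter_univ]
    have : IsClopen (⋂ s ∈ t, (s : Set X)) := by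
      apply Set.Finite.isClopen_biInter (t.finite_toSet)
      exact fun s _ => s.2.1
    exact this
  · simp only [inter_univ, mem_iInter]
    exact fun s _ => s.2.2
  · simp only [inter_univ]
    intro z hz
    by_contra hzU
    have : z ∈ Uᶜ ∩ ⋂ s ∈ t, (s : Set X) := ⟨hzU, hz⟩
    rw [ht] at this
    exact this


end Seg0
section Seg1
/-- Boundary bumping: in a nondegenerate compact connected metric space, every point lies in a
nondegenerate subcontinuum of arbitrarily small diameter. -/
lemma bump_space {Y : Type*} [MetricSpace Y] [CompactSpace Y] [ConnectedSpace Y] [Nontrivial Y]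
    (u : Y) {ε : ℝ} (hε : 0 < ε) :
    ∃ A : Set Y, IsCompact A ∧ IsConnected A ∧ A.Nontrivial ∧ u ∈ A ∧ A ⊆ closedBall u ε := by
  classical
  set K : Set Y := closedBall u ε with hK
  have hKc : IsCompact K := isCompact_closedBall u ε
  have huK : u ∈ K := mem_closedBall_self hε.le
  set A : Set Y := connectedComponentIn K u with hA
  have hAK : A ⊆ K := connectedComponentIn_subset K u
  have huA : u ∈ A := mem_connectedComponentIn huK
  have hAconn : IsConnected A := ⟨⟨u, huA⟩, isPreconnected_connectedComponentIn⟩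
  have hAeq : A = Subtype.val '' connectedComponent (⟨u, huK⟩ : K) :=
    connectedComponentIn_eq_image huK
  have hAcomp : IsCompact A := by
    rw [hAeq]
    haveI : CompactSpace K := isCompact_iff_compactSpace.mp hKc
    exact (isClosed_connectedComponent.isCompact).image continuous_subtype_val
  refine ⟨A, hAcomp, hAconn, ?_, huA, hAK⟩
  by_contra hnt
  -- A = {u}
  have hAu : A = {u} := by
    apply Subset.antisymm _ (singleton_subset_iff.mpr huA)
    intro z hz
    by_contra hzu
    exact hnt ⟨z, hz, u, huA, hzu⟩
  haveI : CompactSpace K := isCompact_iff_compactSpace.mp hKc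
  -- the connected component of ⟨u⟩ in the subtype is a singleton
  have hcc : connectedComponent (⟨u, huK⟩ : K) = {⟨u, huK⟩} := by
    apply Subset.antisymm
    · intro z hz
      have : (z : Y) ∈ A := by rw [hAeq]; exact ⟨z, hz, rfl⟩
      rw [hAu] at this
      have : (z : Y) = u := this
      exact Subtype.ext this
    · exact singleton_subset_iff.mpr mem_connectedComponent
  -- open set: preimage of the open ball
  have hO : IsOpen (Subtype.val ⁻¹' (ball u ε) : Set K) :=
    (isOpen_ball).preimage continuous_subtype_val
  have hsub : connectedComponent (⟨u, huK⟩ : K) ⊆ Subtype.val ⁻¹' (ball u ε) := by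
    rw [hcc]
    simp [mem_ball_self hε]
  obtain ⟨Z, hZclopen, hZu, hZsub⟩ := exists_clopen_of_component_subset hO hsub
  -- P := val '' Z  is clopen in Y
  set P : Set Y := Subtype.val '' Z with hP
  have hPu : u ∈ P := ⟨⟨u, huK⟩, hZu, rfl⟩
  have hPball : P ⊆ ball u ε := by rintro _ ⟨z, hz, rfl⟩; exact hZsub hz
  have hPcl : IsClosed P := ((hZclopen.isClosed.isCompact).image continuous_subtype_val).isClosed
  have hPopen : IsOpen P := by
    obtain ⟨V, hV, hVZ⟩ := (isOpen_induced_iff).mp hZclopen.isOpen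
    have : P = V ∩ ball u ε := by
      apply Subset.antisymm
      · rintro _ ⟨z, hz, rfl⟩
        refine ⟨?_, hZsub hz⟩
        rw [← hVZ] at hz; exact hz
      · rintro z ⟨hzV, hzb⟩
        have hzK : z ∈ K := ball_subset_closedBall hzb
        refine ⟨⟨z, hzK⟩, ?_, rfl⟩
        rw [← hVZ]; exact hzV
    rw [this]
    exact hV.inter isOpen_ball
  -- clopen nonempty in connected space: P = univ
  have hPuniv : P = univ := IsClopen.eq_univ ⟨hPcl, hPopen⟩ ⟨u, hPu⟩
  -- then Y ⊆ ball u ε so K = univ, hence A = connectedComponent u = univ, contradicting A = {u}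
  have hKuniv : K = univ := by
    apply eq_univ_of_univ_subset
    rw [← hPuniv]
    exact hPball.trans ball_subset_closedBall
  have : A = univ := by
    rw [hA, hKuniv, connectedComponentIn_univ]
    exact PreconnectedSpace.connectedComponent_eq_univ u
  rw [hAu] at this
  obtain ⟨a, b, hab⟩ := exists_pair_ne Y
  have ha : a ∈ ({u} : Set Y) := by rw [this]; trivial
  have hb : b ∈ ({u} : Set Y) := by rw [this]; trivial
  exact hab (ha.trans hb.symm)

end Seg1
section Seg2
variable {X : Type*}

lemma chain_inter' [TopologicalSpace X] [T2Space X] {c : Set (Set X)}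
    (hne : c.Nonempty) (hchain : IsChain (· ⊆ ·) c)
    (hcomp : ∀ s ∈ c, IsCompact s) (hconn : ∀ s ∈ c, IsConnected s) :
    IsCompact (⋂₀ c) ∧ IsConnected (⋂₀ c) := by
  classical
  haveI : Nonempty c := hne.to_subtype
  have hdir : Directed (fun x1 x2 : Set X => x1 ⊇ x2) (fun s : c => (s : Set X)) := by
    intro a b
    rcases hchain.total a.2 b.2 with h | h
    · exact ⟨a, Subset.rfl, h⟩
    · exact ⟨b, h, Subset.rfl⟩
  have hicc : ⋂₀ c = ⋂ s : c, (s : Set X) := by rw [sInter_eq_iInter]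
  have hclosed : ∀ s : c, IsClosed (s : Set X) := fun s => (hcomp s s.2).isClosed
  have hnei : (⋂₀ c).Nonempty := by
    rw [hicc]
    exact IsCompact.nonempty_iInter_of_directed_nonempty_isCompact_isClosed _ hdir
      (fun s => (hconn s s.2).nonempty) (fun s => hcomp s s.2) hclosed
  have hiclosed : IsClosed (⋂₀ c) := isClosed_sInter (fun s hs => (hcomp s hs).isClosed)
  obtain ⟨s₀, hs₀⟩ := hne
  have hicomp : IsCompact (⋂₀ c) := (hcomp s₀ hs₀).of_isClosed_subset hiclosed
    (sInter_subset_of_mem hs₀)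
  refine ⟨hicomp, hnei, ?_⟩
  rw [isPreconnected_iff_subset_of_fully_disjoint_closed hiclosed]
  intro u v hu hv hsub hdisj
  have hu' : IsCompact (u ∩ ⋂₀ c) := hicomp.inter_left hu
  have hv' : IsCompact (v ∩ ⋂₀ c) := hicomp.inter_left hv
  obtain ⟨U, V, hU, hV, huU, hvV, hUV⟩ :=
    SeparatedNhds.of_isCompact_isCompact hu' hv'
      (hdisj.mono inter_subset_left inter_subset_left)
  -- some member of the chain is contained in U ∪ V
  by_cases hex : ∃ s ∈ c, s ⊆ U ∪ V
  · obtain ⟨s, hs, hsUV⟩ := hex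
    rcases (hconn s hs).isPreconnected.subset_or_subset hU hV hUV hsUV with h | h
    · left
      intro z hz
      rcases hsub hz with hzu | hzv
      · exact hzu
      · exfalso
        have : z ∈ v ∩ ⋂₀ c := ⟨hzv, hz⟩
        exact (hUV.le_bot ⟨h (sInter_subset_of_mem hs hz), hvV this⟩)
    · right
      intro z hz
      rcases hsub hz with hzu | hzv
      · exfalso
        have : z ∈ u ∩ ⋂₀ c := ⟨hzu, hz⟩
        exact (hUV.le_bot ⟨huU this, h (sInter_subset_of_mem hs hz)⟩)
      · exact hzv
  · exfalso
    push_neg at hex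
    have hne2 : ∀ s : c, ((s : Set X) \ (U ∪ V)).Nonempty := by
      intro s
      rcases not_subset.mp (hex s s.2) with ⟨z, hz1, hz2⟩
      exact ⟨z, hz1, hz2⟩
    have hdif : (⋂ s : c, ((s : Set X) \ (U ∪ V))).Nonempty := by
      apply IsCompact.nonempty_iInter_of_directed_nonempty_isCompact_isClosed
      · intro a b
        obtain ⟨t, h1, h2⟩ := hdir a b
        exact ⟨t, diff_subset_diff_left h1, diff_subset_diff_left h2⟩
      · exact hne2
      · exact fun s => (hcomp s s.2).diff (hU.union hV)
      · exact fun s => (hclosed s).sdiff (hU.union hV)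
    obtain ⟨z, hz⟩ := hdif
    simp only [mem_iInter, mem_diff] at hz
    have hzi : z ∈ ⋂₀ c := by
      rw [hicc, mem_iInter]; exact fun s => (hz s).1
    rcases hsub hzi with hzu | hzv
    · exact (hz ⟨s₀, hs₀⟩).2 (Or.inl (huU ⟨hzu, hzi⟩))
    · exact (hz ⟨s₀, hs₀⟩).2 (Or.inr (hvV ⟨hzv, hzi⟩))

end Seg2
section Seg3
variable {X : Type*}

section transfer
variable [TopologicalSpace X] {W : Set X}

lemma isCompact_preimage_val {A : Set X} (hA : IsCompact A) (hAW : A ⊆ W) :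
    IsCompact (Subtype.val ⁻¹' A : Set W) := by
  rw [IsEmbedding.subtypeVal.isCompact_iff, Subtype.image_preimage_coe,
    inter_eq_self_of_subset_right hAW]
  exact hA

lemma isConnected_preimage_val {A : Set X} (hA : IsConnected A) (hAW : A ⊆ W) :
    IsConnected (Subtype.val ⁻¹' A : Set W) := by
  obtain ⟨a, ha⟩ := hA.nonempty
  constructor
  · exact ⟨⟨a, hAW ha⟩, ha⟩
  · rw [← IsInducing.subtypeVal.isPreconnected_image, Subtype.image_preimage_coe,
      inter_eq_self_of_subset_right hAW]
    exact hA.isPreconnected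

end transfer

/-- a subcontinuum -/
def Cont [TopologicalSpace X] (C : Set X) : Prop := IsCompact C ∧ IsConnected C

/-- `W` is an irreducible continuum between `u` and `v`. -/
structure Irr [TopologicalSpace X] (W : Set X) (u v : X) : Prop where
  memu : u ∈ W
  memv : v ∈ W
  comp : IsCompact W
  conn : IsConnected W
  min : ∀ C : Set X, C ⊆ W → IsCompact C → IsConnected C → u ∈ C → v ∈ C → C = W


/-- existence of an irreducible subcontinuum between two points -/
lemma exists_irr [TopologicalSpace X] [T2Space X] {T : Set X} (hTc : IsCompact T)
    (hTconn : IsConnected T) {u v : X} (hu : u ∈ T) (hv : v ∈ T) :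
    ∃ W ⊆ T, Irr W u v := by
  classical
  set S : Set (Set X) := {C | C ⊆ T ∧ IsCompact C ∧ IsConnected C ∧ u ∈ C ∧ v ∈ C} with hS
  have hTS : T ∈ S := ⟨Subset.rfl, hTc, hTconn, hu, hv⟩
  have hzorn : ∀ c ⊆ S, IsChain (· ⊆ ·) c → c.Nonempty → ∃ lb ∈ S, ∀ s ∈ c, lb ⊆ s := by
    intro c hcS hchain hcne
    obtain ⟨hic, hiconn⟩ := chain_inter' hcne hchain
      (fun s hs => (hcS hs).2.1) (fun s hs => (hcS hs).2.2.1)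
    refine ⟨⋂₀ c, ⟨?_, hic, hiconn, ?_, ?_⟩, fun s hs => sInter_subset_of_mem hs⟩
    · obtain ⟨s, hs⟩ := hcne
      exact (sInter_subset_of_mem hs).trans (hcS hs).1
    · exact fun s hs => (hcS hs).2.2.2.1
    · exact fun s hs => (hcS hs).2.2.2.2
  obtain ⟨m, hmT, hm⟩ := zorn_superset_nonempty S hzorn T hTS
  · refine ⟨m, hm.prop.1, ⟨hm.prop.2.2.2.1, hm.prop.2.2.2.2, hm.prop.2.1, hm.prop.2.2.1, ?_⟩⟩
    intro C hCm hCc hCconn huC hvC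
    have hCS : C ∈ S := ⟨hCm.trans hm.prop.1, hCc, hCconn, huC, hvC⟩
    exact hm.eq_of_subset hCS hCm


end Seg3
section Seg4
variable {X : Type*}


section core
variable [MetricSpace X]

/-- set-level D** property derived from the subtype-level hypothesis -/
lemma dss_set
    (hD : ∀ W : Set X, IsCompact W → IsConnected W → W.Nontrivial →
      ∀ A B : Set (↥W), IsCompact A → IsConnected A → A.Nontrivial →
        IsCompact B → IsConnected B → B.Nontrivial → Disjoint A B →
        ∃ C : Set ↥W, IsCompact C ∧ IsConnected C ∧
          (A ∩ C).Nonempty ∧ (B ∩ C).Nonempty ∧ (B \ C).Nonempty)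
    {W A B : Set X} (hWc : IsCompact W) (hWconn : IsConnected W) (hWnt : W.Nontrivial)
    (hAW : A ⊆ W) (hBW : B ⊆ W)
    (hAc : IsCompact A) (hAconn : IsConnected A) (hAnt : A.Nontrivial)
    (hBc : IsCompact B) (hBconn : IsConnected B) (hBnt : B.Nontrivial)
    (hAB : Disjoint A B) :
    ∃ C ⊆ W, IsCompact C ∧ IsConnected C ∧
      (A ∩ C).Nonempty ∧ (B ∩ C).Nonempty ∧ (B \ C).Nonempty := by
  set A' : Set ↥W := Subtype.val ⁻¹' A with hA'
  set B' : Set ↥W := Subtype.val ⁻¹' B with hB'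
  have hAnt' : A'.Nontrivial := by
    obtain ⟨a, ha, b, hb, hab⟩ := hAnt
    exact ⟨⟨a, hAW ha⟩, ha, ⟨b, hAW hb⟩, hb, by simp [Subtype.ext_iff, hab]⟩
  have hBnt' : B'.Nontrivial := by
    obtain ⟨a, ha, b, hb, hab⟩ := hBnt
    exact ⟨⟨a, hBW ha⟩, ha, ⟨b, hBW hb⟩, hb, by simp [Subtype.ext_iff, hab]⟩
  have hdisj : Disjoint A' B' := by
    rw [disjoint_left]
    intro z hz1 hz2
    exact (disjoint_left.mp hAB) hz1 hz2
  obtain ⟨C', hC'c, hC'conn, h1, h2, h3⟩ := hD W hWc hWconn hWnt A' B'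
    (isCompact_preimage_val hAc hAW) (isConnected_preimage_val hAconn hAW) hAnt'
    (isCompact_preimage_val hBc hBW) (isConnected_preimage_val hBconn hBW) hBnt' hdisj
  refine ⟨Subtype.val '' C', by rintro _ ⟨z, _, rfl⟩; exact z.2,
    hC'c.image continuous_subtype_val,
    ⟨hC'conn.nonempty.image _, hC'conn.isPreconnected.image _ continuous_subtype_val.continuousOn⟩,
    ?_, ?_, ?_⟩
  · obtain ⟨z, hz1, hz2⟩ := h1
    exact ⟨z, hz1, z, hz2, rfl⟩
  · obtain ⟨z, hz1, hz2⟩ := h2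
    exact ⟨z, hz1, z, hz2, rfl⟩
  · obtain ⟨z, hz1, hz2⟩ := h3
    refine ⟨z, hz1, ?_⟩
    rintro ⟨w, hw, hwz⟩
    exact hz2 (by rwa [← Subtype.ext hwz.symm] at hw)

/-- set version of boundary bumping -/
lemma bump_set {W : Set X} (hWc : IsCompact W) (hWconn : IsConnected W) (hWnt : W.Nontrivial)
    {u : X} (hu : u ∈ W) {ε : ℝ} (hε : 0 < ε) :
    ∃ A ⊆ W, IsCompact A ∧ IsConnected A ∧ A.Nontrivial ∧ u ∈ A ∧ A ⊆ closedBall u ε := by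
  haveI : CompactSpace ↥W := isCompact_iff_compactSpace.mp hWc
  haveI : ConnectedSpace ↥W := Subtype.connectedSpace hWconn
  haveI : Nontrivial ↥W := Set.nontrivial_coe_sort.mpr hWnt
  obtain ⟨A', hA'c, hA'conn, hA'nt, huA', hA'ball⟩ := bump_space (⟨u, hu⟩ : ↥W) hε
  refine ⟨Subtype.val '' A', by rintro _ ⟨z, _, rfl⟩; exact z.2,
    hA'c.image continuous_subtype_val,
    ⟨hA'conn.nonempty.image _, hA'conn.isPreconnected.image _ continuous_subtype_val.continuousOn⟩,
    ?_, ⟨⟨u, hu⟩, huA', rfl⟩, ?_⟩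
  · obtain ⟨a, ha, b, hb, hab⟩ := hA'nt
    exact ⟨a, ⟨a, ha, rfl⟩, b, ⟨b, hb, rfl⟩, fun h => hab (Subtype.ext h)⟩
  · rintro _ ⟨z, hz, rfl⟩
    have := hA'ball hz
    rw [mem_closedBall, Subtype.dist_eq] at this
    exact this

end core

end Seg4
section Seg5
variable {X : Type*} [MetricSpace X]

/-- the hereditary D** hypothesis -/
def HD (X : Type*) [MetricSpace X] : Prop :=
  ∀ W : Set X, IsCompact W → IsConnected W → W.Nontrivial → DStarStarSpace ↥W

lemma dss_set' (hD : HD X)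
    {W A B : Set X} (hWc : IsCompact W) (hWconn : IsConnected W) (hWnt : W.Nontrivial)
    (hAW : A ⊆ W) (hBW : B ⊆ W)
    (hAc : IsCompact A) (hAconn : IsConnected A) (hAnt : A.Nontrivial)
    (hBc : IsCompact B) (hBconn : IsConnected B) (hBnt : B.Nontrivial)
    (hAB : Disjoint A B) :
    ∃ C ⊆ W, IsCompact C ∧ IsConnected C ∧
      (A ∩ C).Nonempty ∧ (B ∩ C).Nonempty ∧ (B \ C).Nonempty :=
  dss_set (fun W a b c => hD W a b c) hWc hWconn hWnt hAW hBW hAc hAconn hAnt hBc hBconn hBnt hAB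

/-- key lemma: the set of irreducibility points opposite to `u` contains no nondegenerate
subcontinuum. -/
lemma no_nontrivial_end (hD : HD X) {W : Set X} {u q : X}
    (hirr : Irr W u q) (huq : u ≠ q) {B : Set X} (hBW : B ⊆ W)
    (hBc : IsCompact B) (hBconn : IsConnected B) (hBnt : B.Nontrivial)
    (hBE : ∀ b ∈ B, ∀ C : Set X, C ⊆ W → IsCompact C → IsConnected C → u ∈ C → b ∈ C → C = W) :
    False := by
  have hWnt : W.Nontrivial := ⟨u, hirr.memu, q, hirr.memv, huq⟩
  -- u ∉ B
  have huB : u ∉ B := by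
    intro hu
    have := hBE u hu {u} (singleton_subset_iff.mpr hirr.memu) isCompact_singleton
      isConnected_singleton rfl rfl
    exact huq (by rw [← this] at hirr; exact (hirr.memv).symm)
  -- find a small continuum at u disjoint from B
  obtain ⟨ε, hε, hball⟩ : ∃ ε > 0, closedBall u ε ∩ B = ∅ := by
    obtain ⟨ε, h1, h2⟩ := Metric.isOpen_iff.mp hBc.isClosed.isOpen_compl u huB
    refine ⟨ε/2, by linarith, ?_⟩
    rw [Set.eq_empty_iff_forall_notMem]
    rintro z ⟨hz1, hz2⟩
    exact h2 (closedBall_subset_ball (by linarith) hz1) hz2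
  obtain ⟨A, hAW, hAc, hAconn, hAnt, huA, hAball⟩ := bump_set hirr.comp hirr.conn hWnt
    hirr.memu hε
  have hABdisj : Disjoint A B := by
    rw [disjoint_left]
    intro z hz1 hz2
    rw [Set.eq_empty_iff_forall_notMem] at hball
    exact hball z ⟨hAball hz1, hz2⟩
  obtain ⟨C, hCW, hCc, hCconn, h1, h2, h3⟩ := dss_set' hD hirr.comp hirr.conn hWnt
    hAW hBW hAc hAconn hAnt hBc hBconn hBnt hABdisj
  obtain ⟨z, hzB, hzC⟩ := h2
  have hCA : IsConnected (C ∪ A) := by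
    apply IsConnected.union _ hCconn hAconn
    obtain ⟨w, hw1, hw2⟩ := h1
    exact ⟨w, hw2, hw1⟩
  have : C ∪ A = W := hBE z hzB (C ∪ A) (union_subset hCW hAW) (hCc.union hAc) hCA
    (Or.inr huA) (Or.inl hzC)
  obtain ⟨b, hbB, hbC⟩ := h3
  have hbW : b ∈ C ∪ A := by rw [this]; exact hBW hbB
  rcases hbW with h | h
  · exact hbC h
  · exact (disjoint_left.mp hABdisj) h hbB

/-- FAR lemma: in an irreducible continuum from `u` to `q`, there are proper subcontinua
containing `u` and all of `W` except a small ball around `q`. -/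
lemma far (hD : HD X) {W : Set X} {u q : X} (hirr : Irr W u q) (huq : u ≠ q)
    {ε : ℝ} (hε : 0 < ε) :
    ∃ C ⊆ W, IsCompact C ∧ IsConnected C ∧ u ∈ C ∧ q ∉ C ∧ W \ closedBall q ε ⊆ C := by
  have hWnt : W.Nontrivial := ⟨u, hirr.memu, q, hirr.memv, huq⟩
  obtain ⟨B, hBW, hBc, hBconn, hBnt, hqB, hBball⟩ := bump_set hirr.comp hirr.conn hWnt
    hirr.memv hε
  by_cases hE : ∀ b ∈ B, ∀ C : Set X, C ⊆ W → IsCompact C → IsConnected C → u ∈ C → b ∈ C → C = W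
  · exact absurd (no_nontrivial_end hD hirr huq hBW hBc hBconn hBnt hE) not_false
  · push_neg at hE
    obtain ⟨b, hbB, C, hCW, hCc, hCconn, huC, hbC, hCneW⟩ := hE
    have hqC : q ∉ C := by
      intro hqC
      exact hCneW (hirr.min C hCW hCc hCconn huC hqC)
    have hCB : C ∪ B = W := by
      apply hirr.min _ (union_subset hCW hBW) (hCc.union hBc)
      · exact IsConnected.union ⟨b, hbC, hbB⟩ hCconn hBconn
      · exact Or.inl huC
      · exact Or.inr hqB
    refine ⟨C, hCW, hCc, hCconn, huC, hqC, ?_⟩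
    rintro z ⟨hzW, hzball⟩
    have : z ∈ C ∪ B := by rw [hCB]; exact hzW
    rcases this with h | h
    · exact h
    · exact absurd (hBball h) hzball

/-- two irreducible continua to a common endpoint `p`, from the two ends of an irreducible
continuum `M`, intersect exactly in `p` and cover `M`. -/
lemma cross (hD : HD X) {M : Set X} {x y : X} (hM : Irr M x y) (hxy : x ≠ y)
    {p : X} (hpx : p ≠ x) (hpy : p ≠ y)
    {W V : Set X} (hWM : W ⊆ M) (hVM : V ⊆ M) (hW : Irr W x p) (hV : Irr V y p) :
    W ∩ V = {p} ∧ W ∪ V = M := by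
  constructor
  · apply Subset.antisymm
    · intro z ⟨hzW, hzV⟩
      by_contra hzp
      have hzp' : z ≠ p := hzp
      have hd : 0 < dist z p / 2 := by
        have := dist_pos.mpr hzp'
        linarith
      obtain ⟨C, hCW, hCc, hCconn, hxC, hpC, hCfar⟩ := far hD hW (Ne.symm hpx) hd
      obtain ⟨D, hDV, hDc, hDconn, hyD, hpD, hDfar⟩ := far hD hV (Ne.symm hpy) hd
      have hzC : z ∈ C := hCfar ⟨hzW, by
        rw [mem_closedBall, not_le]
        exact half_lt_self (dist_pos.mpr hzp')⟩
      have hzD : z ∈ D := hDfar ⟨hzV, by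
        rw [mem_closedBall, not_le]
        exact half_lt_self (dist_pos.mpr hzp')⟩
      have hCD : C ∪ D = M := by
        apply hM.min _ (union_subset (hCW.trans hWM) (hDV.trans hVM)) (hCc.union hDc)
        · exact IsConnected.union ⟨z, hzC, hzD⟩ hCconn hDconn
        · exact Or.inl hxC
        · exact Or.inr hyD
      have : p ∈ C ∪ D := by rw [hCD]; exact hWM hW.memv
      rcases this with h | h
      · exact hpC h
      · exact hpD h
    · intro z hz
      rw [mem_singleton_iff] at hz
      subst hz
      exact ⟨hW.memv, hV.memv⟩
  · apply hM.min _ (union_subset hWM hVM) (hW.comp.union hV.comp)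
    · exact IsConnected.union ⟨p, hW.memv, hV.memv⟩ hW.conn hV.conn
    · exact Or.inl hW.memu
    · exact Or.inr hV.memu

/-- an interior point of an irreducible continuum is not "far" from either end: there is a
proper subcontinuum containing `x` and `q`. -/
lemma not_xfar (hD : HD X) {M : Set X} {x y : X} (hM : Irr M x y) (hxy : x ≠ y)
    {q : X} (hq : q ∈ M) (hqx : q ≠ x) (hqy : q ≠ y) :
    ∃ C : Set X, C ⊆ M ∧ IsCompact C ∧ IsConnected C ∧ x ∈ C ∧ q ∈ C ∧ C ≠ M := by
  by_contra h
  push_neg at h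
  have hMxq : Irr M x q := ⟨hM.memu, hq, hM.comp, hM.conn, by
    intro C hCM hCc hCconn hxC hqC
    by_contra hne
    exact hne (h C hCM hCc hCconn hxC hqC)⟩
  have hd : 0 < dist q y / 2 := by
    have := dist_pos.mpr hqy
    linarith
  obtain ⟨C, hCM, hCc, hCconn, hxC, hqC, hCfar⟩ := far hD hMxq (Ne.symm hqx) hd
  have hyC : y ∈ C := hCfar ⟨hM.memv, by
    rw [mem_closedBall, not_le, dist_comm]
    exact half_lt_self (dist_pos.mpr (Ne.symm hqy))⟩
  exact hqC (by rw [hM.min C hCM hCc hCconn hxC hyC]; exact hq)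


end Seg5
section Seg6
variable {X : Type*} [MetricSpace X]

lemma Irr.symm {W : Set X} {u v : X} (h : Irr W u v) : Irr W v u :=
  ⟨h.memv, h.memu, h.comp, h.conn, fun C a b c d e => h.min C a b c e d⟩

/-- the canonical two-sided decomposition of an irreducible continuum -/
structure Sides (M : Set X) (x y : X) where
  W : ↥M → Set X
  V : ↥M → Set X
  WM : ∀ b, W b ⊆ M
  VM : ∀ b, V b ⊆ M
  Wclosed : ∀ b, IsClosed (W b)
  Vclosed : ∀ b, IsClosed (V b)
  memxW : ∀ b, x ∈ W b
  memyV : ∀ b, y ∈ V b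
  membW : ∀ b, (b : X) ∈ W b
  membV : ∀ b, (b : X) ∈ V b
  cover : ∀ b, W b ∪ V b = M
  inter : ∀ b, W b ∩ V b = {(b : X)}
  wmono : ∀ a b : ↥M, (a : X) ∈ W b → W a ⊆ W b
  vmono : ∀ a b : ↥M, (a : X) ∈ V b → V a ⊆ V b
  vinj : ∀ a b : ↥M, V a = V b → a = b
  winj : ∀ a b : ↥M, W a = W b → a = b
  total : ∀ a b : ↥M, (a : X) ∈ W b ∨ (b : X) ∈ W a

variable {M : Set X} {x y : X}

lemma sides_nonempty (hD : HD X) (hM : Irr M x y) (hxy : x ≠ y) :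
    Nonempty (Sides M x y) := by
  classical
  have hMx : x ∈ M := hM.memu
  have hMy : y ∈ M := hM.memv
  have hMcl : IsClosed M := hM.comp.isClosed
  -- existence of the irreducible sides for interior points
  have main : ∀ p : X, p ∈ M → p ≠ x → p ≠ y →
      ∃ W V : Set X, W ⊆ M ∧ V ⊆ M ∧ Irr W x p ∧ Irr V y p := by
    intro p hp hpx hpy
    obtain ⟨C, hCM, hCc, hCconn, hxC, hpC, _⟩ := not_xfar hD hM hxy hp hpx hpy
    obtain ⟨W₀, hW₀C, hW₀⟩ := exists_irr hCc hCconn hxC hpC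
    obtain ⟨C', hC'M, hC'c, hC'conn, hyC', hpC', _⟩ :=
      not_xfar hD hM.symm (Ne.symm hxy) hp hpy hpx
    obtain ⟨V₀, hV₀C, hV₀⟩ := exists_irr hC'c hC'conn hyC' hpC'
    exact ⟨W₀, V₀, hW₀C.trans hCM, hV₀C.trans hC'M, hW₀, hV₀⟩
  choose Wf Vf hWfM hVfM hWfirr hVfirr using main
  -- full versions
  set Wfull : ↥M → Set X := fun b =>
    if hbx : (b : X) = x then {x} else if hby : (b : X) = y then M
    else Wf b b.2 hbx hby with hWfull
  set Vfull : ↥M → Set X := fun b =>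
    if hbx : (b : X) = x then M else if hby : (b : X) = y then {y}
    else Vf b b.2 hbx hby with hVfull
  -- basic facts
  have hWsub : ∀ b, Wfull b ⊆ M := by
    intro b
    rw [hWfull]
    dsimp only
    split_ifs with h1 h2
    · exact singleton_subset_iff.mpr hMx
    · exact Subset.rfl
    · exact hWfM b b.2 h1 h2
  have hVsub : ∀ b, Vfull b ⊆ M := by
    intro b
    rw [hVfull]; dsimp only
    split_ifs with h1 h2
    · exact Subset.rfl
    · exact singleton_subset_iff.mpr hMy
    · exact hVfM b b.2 h1 h2
  have hWcl : ∀ b, IsClosed (Wfull b) := by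
    intro b
    rw [hWfull]; dsimp only
    split_ifs with h1 h2
    · exact isClosed_singleton
    · exact hMcl
    · exact (hWfirr b b.2 h1 h2).comp.isClosed
  have hVcl : ∀ b, IsClosed (Vfull b) := by
    intro b
    rw [hVfull]; dsimp only
    split_ifs with h1 h2
    · exact hMcl
    · exact isClosed_singleton
    · exact (hVfirr b b.2 h1 h2).comp.isClosed
  have hxW : ∀ b, x ∈ Wfull b := by
    intro b
    rw [hWfull]; dsimp only
    split_ifs with h1 h2
    · exact rfl
    · exact hMx
    · exact (hWfirr b b.2 h1 h2).memu
  have hyV : ∀ b, y ∈ Vfull b := by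
    intro b
    rw [hVfull]; dsimp only
    split_ifs with h1 h2
    · exact hMy
    · exact rfl
    · exact (hVfirr b b.2 h1 h2).memu
  have hbW : ∀ b : ↥M, (b : X) ∈ Wfull b := by
    intro b
    rw [hWfull]; dsimp only
    split_ifs with h1 h2
    · exact h1
    · exact b.2
    · exact (hWfirr b b.2 h1 h2).memv
  have hbV : ∀ b : ↥M, (b : X) ∈ Vfull b := by
    intro b
    rw [hVfull]; dsimp only
    split_ifs with h1 h2
    · exact b.2
    · exact h2
    · exact (hVfirr b b.2 h1 h2).memv
  -- cover and intersection, via `cross`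
  have hcrossfull : ∀ b : ↥M, Wfull b ∩ Vfull b = {(b : X)} ∧ Wfull b ∪ Vfull b = M := by
    intro b
    rw [hWfull, hVfull]; dsimp only
    split_ifs with h1 h2
    · constructor
      · rw [inter_eq_self_of_subset_left (singleton_subset_iff.mpr hMx), h1]
      · rw [union_eq_self_of_subset_left (singleton_subset_iff.mpr hMx)]
    · constructor
      · rw [inter_eq_self_of_subset_right (singleton_subset_iff.mpr hMy), h2]
      · rw [union_eq_self_of_subset_right (singleton_subset_iff.mpr hMy)]
    · exact cross hD hM hxy h1 h2 (hWfM b b.2 h1 h2) (hVfM b b.2 h1 h2)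
        (hWfirr b b.2 h1 h2) (hVfirr b b.2 h1 h2)
  have hinter : ∀ b : ↥M, Wfull b ∩ Vfull b = {(b : X)} := fun b => (hcrossfull b).1
  have hcover : ∀ b : ↥M, Wfull b ∪ Vfull b = M := fun b => (hcrossfull b).2
  -- sandwich: any irreducible continuum from x to b coincides with Wfull b, etc.
  have hsand : ∀ (b : ↥M) (W' V' : Set X), W' ∩ V' = {(b : X)} → W' ∪ V' = M →
      W' = (M \ V') ∪ {(b : X)} := by
    intro b W' V' hi hc
    apply Subset.antisymm
    · intro z hz
      by_cases hzb : z = (b : X)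
      · exact Or.inr hzb
      · left
        refine ⟨by rw [← hc]; exact Or.inl hz, fun hzV => hzb ?_⟩
        have : z ∈ W' ∩ V' := ⟨hz, hzV⟩
        rwa [hi] at this
    · rintro z (⟨hzM, hzV⟩ | hzb)
      · have : z ∈ W' ∪ V' := by rw [hc]; exact hzM
        rcases this with h | h
        · exact h
        · exact absurd h hzV
      · rw [mem_singleton_iff] at hzb
        subst hzb
        have : (b : X) ∈ W' ∩ V' := by rw [hi]; exact rfl
        exact this.1
  -- uniqueness of irreducible sides
  have huniqW : ∀ (b : ↥M), (b:X) ≠ x → (b:X) ≠ y → ∀ W', W' ⊆ M → Irr W' x (b : X) →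
      W' = Wfull b := by
    intro b hbx hby W' hW'M hW'
    have h1 := cross hD hM hxy hbx hby hW'M (hVsub b) hW' ?hv
    case hv =>
      rw [hVfull]; dsimp only
      rw [dif_neg hbx, dif_neg hby]
      exact hVfirr b b.2 hbx hby
    have h2 : Wfull b ∩ Vfull b = {(b:X)} ∧ Wfull b ∪ Vfull b = M := ⟨hinter b, hcover b⟩
    rw [hsand b W' (Vfull b) h1.1 h1.2, hsand b (Wfull b) (Vfull b) h2.1 h2.2]
  have huniqV : ∀ (b : ↥M), (b:X) ≠ x → (b:X) ≠ y → ∀ V', V' ⊆ M → Irr V' y (b : X) →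
      V' = Vfull b := by
    intro b hbx hby V' hV'M hV'
    have h1 := cross hD hM hxy hbx hby (hWsub b) hV'M ?hw hV'
    case hw =>
      rw [hWfull]; dsimp only
      rw [dif_neg hbx, dif_neg hby]
      exact hWfirr b b.2 hbx hby
    have h2 : Wfull b ∩ Vfull b = {(b:X)} ∧ Wfull b ∪ Vfull b = M := ⟨hinter b, hcover b⟩
    have e1 : V' = (M \ Wfull b) ∪ {(b:X)} := by
      rw [← hsand b V' (Wfull b) (by rw [inter_comm]; exact h1.1) (by rw [union_comm]; exact h1.2)]
    have e2 : Vfull b = (M \ Wfull b) ∪ {(b:X)} := by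
      rw [← hsand b (Vfull b) (Wfull b) (by rw [inter_comm]; exact h2.1)
        (by rw [union_comm]; exact h2.2)]
    rw [e1, e2]
  -- monotonicity
  have hwmono : ∀ a b : ↥M, (a : X) ∈ Wfull b → Wfull a ⊆ Wfull b := by
    intro a b hab
    by_cases hax : (a : X) = x
    · intro z hz
      rw [hWfull] at hz; dsimp only at hz
      rw [dif_pos hax, mem_singleton_iff] at hz
      subst hz
      exact hxW b
    by_cases hay : (a : X) = y
    · -- then a = b
      have hyWb : y ∈ Wfull b := by rw [← hay]; exact hab
      have : y ∈ Wfull b ∩ Vfull b := ⟨hyWb, hyV b⟩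
      rw [hinter b, mem_singleton_iff] at this
      have hab2 : a = b := Subtype.ext (hay.trans this)
      rw [hab2]
    by_cases hbx : (b : X) = x
    · exfalso
      rw [hWfull] at hab; dsimp only at hab
      rw [dif_pos hbx, mem_singleton_iff] at hab
      exact hax hab
    by_cases hby : (b : X) = y
    · have : Wfull b = M := by
        rw [hWfull]; dsimp only
        rw [dif_neg hbx, dif_pos hby]
      rw [this]
      exact hWsub a
    · -- both interior
      have hbIrr : Irr (Wfull b) x (b : X) := by
        rw [hWfull]; dsimp only
        rw [dif_neg hbx, dif_neg hby]
        exact hWfirr b b.2 hbx hby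
      obtain ⟨W', hW'sub, hW'⟩ := exists_irr hbIrr.comp hbIrr.conn (hxW b) hab
      have := huniqW a hax hay W' (hW'sub.trans (hWsub b)) hW'
      rw [← this]
      exact hW'sub
  have hvmono : ∀ a b : ↥M, (a : X) ∈ Vfull b → Vfull a ⊆ Vfull b := by
    intro a b hab
    by_cases hay : (a : X) = y
    · intro z hz
      rw [hVfull] at hz; dsimp only at hz
      rw [dif_neg (fun h : (a:X) = x => hxy ((h.symm.trans hay))), dif_pos hay,
        mem_singleton_iff] at hz
      subst hz
      exact hyV b
    by_cases hax : (a : X) = x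
    · have hxVb : x ∈ Vfull b := by rw [← hax]; exact hab
      have : x ∈ Wfull b ∩ Vfull b := ⟨hxW b, hxVb⟩
      rw [hinter b, mem_singleton_iff] at this
      have hab2 : a = b := Subtype.ext (hax.trans this)
      rw [hab2]
    by_cases hby : (b : X) = y
    · exfalso
      rw [hVfull] at hab; dsimp only at hab
      rw [dif_neg (fun h : (b:X) = x => hxy ((h.symm.trans hby))), dif_pos hby,
        mem_singleton_iff] at hab
      exact hay hab
    by_cases hbx : (b : X) = x
    · have : Vfull b = M := by
        rw [hVfull]; dsimp only
        rw [dif_pos hbx]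
      rw [this]
      exact hVsub a
    · have hbIrr : Irr (Vfull b) y (b : X) := by
        rw [hVfull]; dsimp only
        rw [dif_neg hbx, dif_neg hby]
        exact hVfirr b b.2 hbx hby
      obtain ⟨V', hV'sub, hV'⟩ := exists_irr hbIrr.comp hbIrr.conn (hyV b) hab
      have := huniqV a hax hay V' (hV'sub.trans (hVsub b)) hV'
      rw [← this]
      exact hV'sub
  -- injectivity
  have hvinj : ∀ a b : ↥M, Vfull a = Vfull b → a = b := by
    intro a b hV
    by_contra hne
    have hne' : (a : X) ≠ (b : X) := fun h => hne (Subtype.ext h)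
    have e1 : Wfull a = (M \ Vfull a) ∪ {(a : X)} := hsand a _ _ (hinter a) (hcover a)
    have e2 : Wfull b = (M \ Vfull a) ∪ {(b : X)} := by
      rw [hV]
      exact hsand b _ _ (hinter b) (hcover b)
    have h1 : closure (M \ Vfull a) ⊆ Wfull a :=
      closure_minimal (by rw [e1]; exact subset_union_left) (hWcl a)
    have h2 : closure (M \ Vfull a) ⊆ Wfull b :=
      closure_minimal (by rw [e2]; exact subset_union_left) (hWcl b)
    have hdiffcl : IsClosed (M \ Vfull a) := by
      apply isClosed_of_closure_subset
      intro z hz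
      have za := h1 hz
      have zb := h2 hz
      rw [e1] at za
      rw [e2] at zb
      rcases za with h | h
      · exact h
      rcases zb with h' | h'
      · exact h'
      · exact absurd (h.symm.trans h') hne'
    have := (isPreconnected_iff_subset_of_fully_disjoint_closed hMcl).mp
      hM.conn.isPreconnected (M \ Vfull a) (Vfull a) hdiffcl (hVcl a)
      (by
        intro z hz
        by_cases h : z ∈ Vfull a
        · exact Or.inr h
        · exact Or.inl ⟨hz, h⟩)
      disjoint_sdiff_left
    rcases this with h | h
    · exact (h (hVsub a (hbV a))).2 (hbV a)
    · have hx1 : x ∈ Wfull a ∩ Vfull a := ⟨hxW a, h hMx⟩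
      rw [hinter a, mem_singleton_iff] at hx1
      have hx2 : x ∈ Wfull b ∩ Vfull b := ⟨hxW b, by rw [← hV]; exact h hMx⟩
      rw [hinter b, mem_singleton_iff] at hx2
      exact hne' (hx1 ▸ hx2 ▸ rfl)
  have hwinj : ∀ a b : ↥M, Wfull a = Wfull b → a = b := by
    intro a b hW
    by_contra hne
    have hne' : (a : X) ≠ (b : X) := fun h => hne (Subtype.ext h)
    have e1 : Vfull a = (M \ Wfull a) ∪ {(a : X)} :=
      hsand a _ _ (by rw [inter_comm]; exact hinter a) (by rw [union_comm]; exact hcover a)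
    have e2 : Vfull b = (M \ Wfull a) ∪ {(b : X)} := by
      rw [hW]
      exact hsand b _ _ (by rw [inter_comm]; exact hinter b) (by rw [union_comm]; exact hcover b)
    have h1 : closure (M \ Wfull a) ⊆ Vfull a :=
      closure_minimal (by rw [e1]; exact subset_union_left) (hVcl a)
    have h2 : closure (M \ Wfull a) ⊆ Vfull b :=
      closure_minimal (by rw [e2]; exact subset_union_left) (hVcl b)
    have hdiffcl : IsClosed (M \ Wfull a) := by
      apply isClosed_of_closure_subset
      intro z hz
      have za := h1 hz
      have zb := h2 hz
      rw [e1] at za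
      rw [e2] at zb
      rcases za with h | h
      · exact h
      rcases zb with h' | h'
      · exact h'
      · exact absurd (h.symm.trans h') hne'
    have := (isPreconnected_iff_subset_of_fully_disjoint_closed hMcl).mp
      hM.conn.isPreconnected (M \ Wfull a) (Wfull a) hdiffcl (hWcl a)
      (by
        intro z hz
        by_cases h : z ∈ Wfull a
        · exact Or.inr h
        · exact Or.inl ⟨hz, h⟩)
      disjoint_sdiff_left
    rcases this with h | h
    · exact (h (hWsub a (hbW a))).2 (hbW a)
    · have hx1 : y ∈ Wfull a ∩ Vfull a := ⟨h hMy, hyV a⟩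
      rw [hinter a, mem_singleton_iff] at hx1
      have hx2 : y ∈ Wfull b ∩ Vfull b := ⟨by rw [← hW]; exact h hMy, hyV b⟩
      rw [hinter b, mem_singleton_iff] at hx2
      exact hne' (hx1 ▸ hx2 ▸ rfl)
  have htotal : ∀ a b : ↥M, (a : X) ∈ Wfull b ∨ (b : X) ∈ Wfull a := by
    intro a b
    by_contra h
    push_neg at h
    obtain ⟨h1, h2⟩ := h
    have ha : (a : X) ∈ Vfull b := by
      have : (a : X) ∈ Wfull b ∪ Vfull b := by rw [hcover b]; exact a.2
      rcases this with h | h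
      · exact absurd h h1
      · exact h
    have hb : (b : X) ∈ Vfull a := by
      have : (b : X) ∈ Wfull a ∪ Vfull a := by rw [hcover a]; exact b.2
      rcases this with h | h
      · exact absurd h h2
      · exact h
    have hVeq : Vfull a = Vfull b := Subset.antisymm (hvmono a b ha) (hvmono b a hb)
    have : a = b := hvinj a b hVeq
    rw [this] at h1
    exact h1 (hbW b)
  exact ⟨⟨Wfull, Vfull, hWsub, hVsub, hWcl, hVcl, hxW, hyV, hbW, hbV, hcover, hinter,
    hwmono, hvmono, hvinj, hwinj, htotal⟩⟩

end Seg6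
section Seg7
variable {X : Type*} [MetricSpace X]

theorem arc_of_sides [SecondCountableTopology X] {M : Set X} {x y : X}
    (hM : Irr M x y) (hxy : x ≠ y) (s : Sides M x y) {S : Set X} (hMS : M ⊆ S) :
    ∃ f : Set.Icc (0 : ℝ) 1 → ↥S, Continuous f ∧ Function.Injective f ∧
      f ⟨0, le_refl 0, zero_le_one⟩ = ⟨x, hMS hM.memu⟩ ∧
      f ⟨1, zero_le_one, le_refl 1⟩ = ⟨y, hMS hM.memv⟩ := by
  classical
  haveI hTM : CompactSpace ↥M := isCompact_iff_compactSpace.mp hM.comp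
  haveI : ConnectedSpace ↥M := Subtype.connectedSpace hM.conn
  set xM : ↥M := ⟨x, hM.memu⟩ with hxM
  set yM : ↥M := ⟨y, hM.memv⟩ with hyM
  letI lo : LinearOrder ↥M :=
    { le := fun a b => (a : X) ∈ s.W b
      le_refl := fun a => s.membW a
      le_trans := fun a b c hab hbc => s.wmono b c hbc hab
      le_antisymm := fun a b hab hba =>
        s.winj a b (Subset.antisymm (s.wmono a b hab) (s.wmono b a hba))
      le_total := fun a b => s.total a b
      toDecidableLE := fun _ _ => Classical.propDecidable _ }
  have hle : ∀ a b : ↥M, a ≤ b ↔ (a : X) ∈ s.W b := fun a b => Iff.rfl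
  have hleV : ∀ a b : ↥M, a ≤ b ↔ (b : X) ∈ s.V a := by
    intro a b
    constructor
    · intro h
      by_cases hba : b ≤ a
      · have : a = b := le_antisymm h hba
        rw [← this]
        exact s.membV a
      · have hm : (b : X) ∈ s.W a ∪ s.V a := by rw [s.cover a]; exact b.2
        rcases hm with h' | h'
        · exact absurd ((hle b a).mpr h') hba
        · exact h'
    · intro h
      by_cases hab : a ≤ b
      · exact hab
      · have hm : (a : X) ∈ s.W b ∪ s.V b := by rw [s.cover b]; exact a.2
        rcases hm with h' | h'
        · exact (hle a b).mpr h'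
        · have heq : a = b := s.vinj a b (Subset.antisymm (s.vmono a b h') (s.vmono b a h))
          exact heq ▸ le_refl a
  have hmin : ∀ z : ↥M, xM ≤ z := fun z => (hle xM z).mpr (s.memxW z)
  have hmax : ∀ z : ↥M, z ≤ yM := fun z => (hleV z yM).mpr (s.memyV z)
  have hraycl_le : ∀ b : ↥M, IsClosed {z : ↥M | z ≤ b} := by
    intro b
    have : {z : ↥M | z ≤ b} = Subtype.val ⁻¹' (s.W b) := rfl
    rw [this]
    exact (s.Wclosed b).preimage continuous_subtype_val
  have hraycl_ge : ∀ b : ↥M, IsClosed {z : ↥M | b ≤ z} := by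
    intro b
    have : {z : ↥M | b ≤ z} = Subtype.val ⁻¹' (s.V b) := by
      ext z
      exact hleV b z
    rw [this]
    exact (s.Vclosed b).preimage continuous_subtype_val
  have hrayopen_lt : ∀ b : ↥M, IsOpen {z : ↥M | b < z} := by
    intro b
    have : {z : ↥M | b < z} = {z : ↥M | z ≤ b}ᶜ := by
      ext z
      simp only [mem_setOf_eq, mem_compl_iff, lt_iff_not_ge]
    rw [this]
    exact (hraycl_le b).isOpen_compl
  have hrayopen_gt : ∀ b : ↥M, IsOpen {z : ↥M | z < b} := by
    intro b
    have : {z : ↥M | z < b} = {z : ↥M | b ≤ z}ᶜ := by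
      ext z
      simp only [mem_setOf_eq, mem_compl_iff, lt_iff_not_ge]
    rw [this]
    exact (hraycl_ge b).isOpen_compl
  have hdense : ∀ a b : ↥M, a < b → ∃ c, a < c ∧ c < b := by
    intro a b hab
    by_contra h
    push_neg at h
    have hcov : ∀ z : ↥M, z ≤ a ∨ b ≤ z := by
      intro z
      by_cases h1 : z ≤ a
      · exact Or.inl h1
      · exact Or.inr (h z (lt_of_not_ge h1))
    have := (isPreconnected_iff_subset_of_fully_disjoint_closed isClosed_univ).mp
      isPreconnected_univ {z : ↥M | z ≤ a} {z : ↥M | b ≤ z} (hraycl_le a) (hraycl_ge b)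
      (fun z _ => hcov z)
      (by
        rw [disjoint_left]
        intro z h1 h2
        exact absurd (le_trans h2 h1) (not_le_of_gt hab))
    rcases this with h' | h'
    · exact not_le_of_gt hab (h' (mem_univ b))
    · exact not_le_of_gt hab (h' (mem_univ a))
  obtain ⟨D, hDc, hDd⟩ := TopologicalSpace.exists_countable_dense ↥M
  set D' : Set ↥M := D \ {xM, yM} with hD'
  have hD'c : D'.Countable := hDc.mono diff_subset
  have hbetween : ∀ a b : ↥M, a < b → ∃ d ∈ D', a < d ∧ d < b := by
    intro a b hab
    obtain ⟨c, hc1, hc2⟩ := hdense a b hab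
    have hIopen : IsOpen {z : ↥M | a < z ∧ z < b} :=
      IsOpen.inter (hrayopen_lt a) (hrayopen_gt b)
    obtain ⟨d, hdD, hd⟩ := hDd.exists_mem_open hIopen ⟨c, hc1, hc2⟩
    refine ⟨d, ⟨hdD, ?_⟩, hd.1, hd.2⟩
    intro hmem
    simp only [mem_insert_iff, mem_singleton_iff] at hmem
    rcases hmem with h | h
    · rw [h] at hd
      exact absurd (lt_of_lt_of_le hd.1 (hmin a)) (lt_irrefl a)
    · rw [h] at hd
      exact absurd (lt_of_le_of_lt (hmax b) hd.2) (lt_irrefl b)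
  haveI : Countable ↥D' := hD'c.to_subtype
  have hxyM : xM < yM :=
    lt_of_le_of_ne (hmin yM) (fun h => hxy (congrArg Subtype.val h))
  haveI : Nonempty ↥D' := by
    obtain ⟨d, hd, _⟩ := hbetween xM yM hxyM
    exact ⟨⟨d, hd⟩⟩
  haveI : DenselyOrdered ↥D' := by
    constructor
    intro d1 d2 h
    obtain ⟨d, hdD, h1, h2⟩ := hbetween d1 d2 (Subtype.coe_lt_coe.mpr h)
    exact ⟨⟨d, hdD⟩, Subtype.coe_lt_coe.mp h1, Subtype.coe_lt_coe.mp h2⟩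
  haveI : NoMinOrder ↥D' := by
    constructor
    intro d
    have hne : xM ≠ (d : ↥M) := by
      intro h
      exact d.2.2 (by rw [← h]; exact mem_insert _ _)
    obtain ⟨e2, heD, _, h2⟩ := hbetween xM d (lt_of_le_of_ne (hmin d) hne)
    exact ⟨⟨e2, heD⟩, Subtype.coe_lt_coe.mp h2⟩
  haveI : NoMaxOrder ↥D' := by
    constructor
    intro d
    have hne : (d : ↥M) ≠ yM := by
      intro h
      exact d.2.2 (by rw [h]; exact mem_insert_of_mem _ rfl)
    obtain ⟨e2, heD, h1, _⟩ := hbetween d yM (lt_of_le_of_ne (hmax d) hne)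
    exact ⟨⟨e2, heD⟩, Subtype.coe_lt_coe.mp h1⟩
  -- the rational interval
  haveI : Nonempty ↥(Ioo (0:ℚ) 1) := ⟨⟨1/2, by norm_num⟩⟩
  haveI : DenselyOrdered ↥(Ioo (0:ℚ) 1) := by
    constructor
    rintro ⟨a, ha1, ha2⟩ ⟨b, hb1, hb2⟩ h
    rw [← Subtype.coe_lt_coe] at h
    refine ⟨⟨(a + b)/2, by constructor <;> [linarith; linarith]⟩, ?_, ?_⟩
    · rw [← Subtype.coe_lt_coe]
      show a < (a + b)/2
      linarith
    · rw [← Subtype.coe_lt_coe]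
      show (a + b)/2 < b
      linarith
  haveI : NoMinOrder ↥(Ioo (0:ℚ) 1) := by
    constructor
    rintro ⟨a, ha1, ha2⟩
    refine ⟨⟨a/2, by constructor <;> linarith⟩, ?_⟩
    rw [← Subtype.coe_lt_coe]
    show a/2 < a
    linarith
  haveI : NoMaxOrder ↥(Ioo (0:ℚ) 1) := by
    constructor
    rintro ⟨a, ha1, ha2⟩
    refine ⟨⟨(a+1)/2, by constructor <;> linarith⟩, ?_⟩
    rw [← Subtype.coe_lt_coe]
    show a < (a+1)/2
    linarith
  obtain ⟨e⟩ := Order.iso_of_countable_dense ↥D' ↥(Ioo (0:ℚ) 1)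
  set g : ↥D' → ℝ := fun d => ((e d : ℚ) : ℝ) with hg
  have hgdef : ∀ d, g d = ((e d : ℚ) : ℝ) := fun _ => rfl
  have hg0 : ∀ d, 0 < g d := fun d => by rw [hgdef]; exact_mod_cast (e d).2.1
  have hg1 : ∀ d, g d < 1 := fun d => by rw [hgdef]; exact_mod_cast (e d).2.2
  have hgmono : StrictMono g := by
    intro a b h
    have h1 : e a < e b := e.strictMono h
    have h2 : ((e a : ℚ) : ℝ) < ((e b : ℚ) : ℝ) := by
      exact_mod_cast Subtype.coe_lt_coe.mpr h1
    exact h2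
  have hgsurj : ∀ r : ℚ, 0 < r → r < 1 → ∃ d, g d = r := by
    intro r h0 h1
    obtain ⟨d, hd⟩ := e.surjective ⟨r, h0, h1⟩
    refine ⟨d, ?_⟩
    rw [hg]
    simp only
    rw [hd]
  set gset : ↥M → Set ℝ := fun p => g '' {d : ↥D' | (d : ↥M) ≤ p} with hgset
  have hbdd : ∀ p, BddAbove (gset p) := by
    intro p
    refine ⟨1, ?_⟩
    rintro r ⟨d, _, rfl⟩
    exact (hg1 d).le
  set f : ↥M → ℝ := fun p => sSup (gset p) with hf
  have hf0 : ∀ p, 0 ≤ f p := by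
    intro p
    apply Real.sSup_nonneg
    rintro r ⟨d, _, rfl⟩
    exact (hg0 d).le
  have hf1 : ∀ p, f p ≤ 1 := by
    intro p
    by_cases h : (gset p).Nonempty
    · refine csSup_le h ?_
      rintro r ⟨d, _, rfl⟩
      exact (hg1 d).le
    · rw [not_nonempty_iff_eq_empty] at h
      show sSup (gset p) ≤ 1
      rw [h, Real.sSup_empty]
      norm_num
  have hfd_le : ∀ (d : ↥D') (p : ↥M), (d : ↥M) ≤ p → g d ≤ f p :=
    fun d p h => le_csSup (hbdd p) ⟨d, h, rfl⟩
  have hfd_ub : ∀ (d : ↥D') (p : ↥M), p < (d : ↥M) → f p ≤ g d := by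
    intro d p h
    by_cases hne : (gset p).Nonempty
    · refine csSup_le hne ?_
      rintro r ⟨e2, he2, rfl⟩
      have : (e2 : ↥M) < (d : ↥M) := lt_of_le_of_lt he2 h
      exact (hgmono (Subtype.coe_lt_coe.mp this)).le
    · rw [not_nonempty_iff_eq_empty] at hne
      show sSup (gset p) ≤ g d
      rw [hne, Real.sSup_empty]
      exact (hg0 d).le
  have hfmono : StrictMono f := by
    intro p q h
    obtain ⟨d, hdD, h1, h2⟩ := hbetween p q h
    obtain ⟨d', hd'D, h3, h4⟩ := hbetween d q h2
    calc f p ≤ g ⟨d, hdD⟩ := hfd_ub ⟨d, hdD⟩ p h1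
    _ < g ⟨d', hd'D⟩ := hgmono (Subtype.coe_lt_coe.mp h3)
    _ ≤ f q := hfd_le ⟨d', hd'D⟩ q h4.le
  have hfx : f xM = 0 := by
    have hempty : gset xM = ∅ := by
      rw [eq_empty_iff_forall_notMem]
      rintro r ⟨d, hd, rfl⟩
      have : (d : ↥M) = xM := le_antisymm hd (hmin _)
      exact d.2.2 (by rw [this]; exact mem_insert _ _)
    show sSup (gset xM) = 0
    rw [hempty, Real.sSup_empty]
  have hfy : f yM = 1 := by
    refine le_antisymm (hf1 yM) ?_
    by_contra hlt
    push_neg at hlt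
    obtain ⟨r, hr1, hr2⟩ := exists_rat_btwn hlt
    have hr0 : (0:ℝ) < r := lt_of_le_of_lt (hf0 yM) hr1
    obtain ⟨d, hd⟩ := hgsurj r (by exact_mod_cast hr0) (by exact_mod_cast hr2)
    have hle2 := hfd_le d yM (hmax _)
    rw [hd] at hle2
    exact absurd (lt_of_le_of_lt hle2 hr1) (lt_irrefl _)
  have hcont : Continuous f := by
    have hgen : (inferInstance : TopologicalSpace ℝ) =
        TopologicalSpace.generateFrom {u | ∃ a, u = Ioi a ∨ u = Iio a} :=
      OrderTopology.topology_eq_generate_intervals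
    have hmain : Continuous[_, TopologicalSpace.generateFrom {u | ∃ a, u = Ioi a ∨ u = Iio a}] f := by
      refine continuous_generateFrom_iff.mpr ?_
      rintro u ⟨t, rfl | rfl⟩
      · by_cases ht : 0 ≤ t
        · have heq : f ⁻¹' (Ioi t) = ⋃ (d : ↥D') (_ : t < g d), {z : ↥M | (d : ↥M) < z} := by
            ext p
            simp only [mem_preimage, mem_Ioi, mem_iUnion, mem_setOf_eq]
            constructor
            · intro hp
              have hne : (gset p).Nonempty := by
                by_contra hemp
                rw [not_nonempty_iff_eq_empty] at hemp
                have h0 : f p = 0 := by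
                  show sSup (gset p) = 0
                  rw [hemp, Real.sSup_empty]
                rw [h0] at hp
                exact absurd hp (not_lt.mpr ht)
              obtain ⟨r0, hr0mem, hr0⟩ := exists_lt_of_lt_csSup hne hp
              obtain ⟨d, hdle, rfl⟩ := hr0mem
              obtain ⟨r, hr1, hr2⟩ := exists_rat_btwn hr0
              have h0r : (0:ℝ) < r := lt_of_le_of_lt ht hr1
              have h1r : (r:ℝ) < 1 := lt_trans hr2 (hg1 d)
              obtain ⟨d0, hd0⟩ := hgsurj r (by exact_mod_cast h0r) (by exact_mod_cast h1r)
              refine ⟨d0, by rw [hd0]; exact hr1, ?_⟩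
              have hdd : d0 < d := by
                have : g d0 < g d := by rw [hd0]; exact hr2
                exact hgmono.lt_iff_lt.mp this
              exact lt_of_lt_of_le (Subtype.coe_lt_coe.mpr hdd) hdle
            · rintro ⟨d, hd1, hd2⟩
              exact lt_of_lt_of_le hd1 (hfd_le d p hd2.le)
          rw [heq]
          exact isOpen_iUnion fun d => isOpen_iUnion fun _ => hrayopen_lt _
        · have heq : f ⁻¹' (Ioi t) = univ := by
            rw [eq_univ_iff_forall]
            intro p
            exact lt_of_lt_of_le (lt_of_not_ge ht) (hf0 p)
          rw [heq]
          exact isOpen_univ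
      · by_cases ht : t ≤ 1
        · have heq : f ⁻¹' (Iio t) = ⋃ (d : ↥D') (_ : g d < t), {z : ↥M | z < (d : ↥M)} := by
            ext p
            simp only [mem_preimage, mem_Iio, mem_iUnion, mem_setOf_eq]
            constructor
            · intro hp
              obtain ⟨r, hr1, hr2⟩ := exists_rat_btwn hp
              have h0r : (0:ℝ) < r := lt_of_le_of_lt (hf0 p) hr1
              have h1r : (r:ℝ) < 1 := lt_of_lt_of_le hr2 ht
              obtain ⟨d, hd⟩ := hgsurj r (by exact_mod_cast h0r) (by exact_mod_cast h1r)
              refine ⟨d, by rw [hd]; exact hr2, ?_⟩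
              have hnle : ¬ ((d : ↥M) ≤ p) := by
                intro hle2
                have := hfd_le d p hle2
                rw [hd] at this
                exact absurd (lt_of_le_of_lt this hr1) (lt_irrefl _)
              exact lt_of_not_ge hnle
            · rintro ⟨d, hd1, hd2⟩
              exact lt_of_le_of_lt (hfd_ub d p hd2) hd1
          rw [heq]
          exact isOpen_iUnion fun d => isOpen_iUnion fun _ => hrayopen_gt _
        · have heq : f ⁻¹' (Iio t) = univ := by
            rw [eq_univ_iff_forall]
            intro p
            exact lt_of_le_of_lt (hf1 p) (lt_of_not_ge ht)
          rw [heq]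
          exact isOpen_univ
    rwa [← hgen] at hmain
  -- assemble the homeomorphism
  set F : ↥M → ↥(Set.Icc (0:ℝ) 1) := fun p => ⟨f p, hf0 p, hf1 p⟩ with hF
  have hFcont : Continuous F := hcont.subtype_mk _
  have hFinj : Function.Injective F := by
    intro a b h
    exact hfmono.injective (congrArg Subtype.val h)
  have hFsurj : Function.Surjective F := by
    rintro ⟨t, ht0, ht1⟩
    have hrange : Icc (0:ℝ) 1 ⊆ range f := by
      have hpre : IsPreconnected (range f) := isPreconnected_range hcont
      have h1 : (0:ℝ) ∈ range f := ⟨xM, hfx⟩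
      have h2 : (1:ℝ) ∈ range f := ⟨yM, hfy⟩
      exact hpre.Icc_subset h1 h2
    obtain ⟨p, hp⟩ := hrange ⟨ht0, ht1⟩
    exact ⟨p, Subtype.ext hp⟩
  set eqv : ↥M ≃ ↥(Set.Icc (0:ℝ) 1) := Equiv.ofBijective F ⟨hFinj, hFsurj⟩ with heqv
  have heqvcont : Continuous eqv := hFcont
  set homeo : ↥M ≃ₜ ↥(Set.Icc (0:ℝ) 1) := heqvcont.homeoOfEquivCompactToT2 with hhomeo
  have hh0 : homeo xM = ⟨0, le_refl 0, zero_le_one⟩ := Subtype.ext hfx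
  have hh1 : homeo yM = ⟨1, zero_le_one, le_refl 1⟩ := Subtype.ext hfy
  refine ⟨fun t => Set.inclusion hMS (homeo.symm t), ?_, ?_, ?_, ?_⟩
  · exact (continuous_inclusion hMS).comp homeo.symm.continuous
  · exact (Set.inclusion_injective hMS).comp homeo.symm.injective
  · have hs0 : homeo.symm ⟨0, le_refl 0, zero_le_one⟩ = xM := by
      rw [← hh0]
      exact Homeomorph.symm_apply_apply _ _
    show inclusion hMS (homeo.symm ⟨0, le_refl 0, zero_le_one⟩) = ⟨x, hMS hM.memu⟩
    rw [hs0]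
  · have hs1 : homeo.symm ⟨1, zero_le_one, le_refl 1⟩ = yM := by
      rw [← hh1]
      exact Homeomorph.symm_apply_apply _ _
    show inclusion hMS (homeo.symm ⟨1, zero_le_one, le_refl 1⟩) = ⟨y, hMS hM.memv⟩
    rw [hs1]

end Seg7
section Seg8
variable {Y : Type*} [TopologicalSpace Y]

lemma wilder_to_dss (h : WilderSpace Y) : DStarStarSpace Y := by
  intro A B hAc hAconn hAnt hBc hBconn hBnt hAB
  obtain ⟨a, ha⟩ := hAconn.nonempty
  obtain ⟨b1, hb1, b2, hb2, hb12⟩ := hBnt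
  have hab1 : a ≠ b1 := fun h' => (disjoint_left.mp hAB) ha (h' ▸ hb1)
  have hab2 : a ≠ b2 := fun h' => (disjoint_left.mp hAB) ha (h' ▸ hb2)
  obtain ⟨C, hCc, hCconn, haC, hxor⟩ := h a b1 b2 hab1 hb12 hab2
  rcases hxor with ⟨h1, h2⟩ | ⟨h1, h2⟩
  · exact ⟨C, hCc, hCconn, ⟨a, ha, haC⟩, ⟨b1, hb1, h1⟩, ⟨b2, hb2, h2⟩⟩
  · exact ⟨C, hCc, hCconn, ⟨a, ha, haC⟩, ⟨b2, hb2, h1⟩, ⟨b1, hb1, h2⟩⟩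

lemma ds_to_dss (h : DStarSpace Y) : DStarStarSpace Y := by
  intro A B hAc hAconn hAnt hBc hBconn hBnt hAB
  obtain ⟨C, hCc, hCconn, h1, h2, _, h4⟩ := h A B hAc hAconn hAnt hBc hBconn hBnt hAB
  exact ⟨C, hCc, hCconn, h1, h2, h4⟩

variable [T2Space Y]

-- convenient instances
noncomputable local instance : ConnectedSpace ↥(Set.Icc (0:ℝ) 1) :=
  Subtype.connectedSpace (isConnected_Icc zero_le_one)

lemma seg_compact_conn {t0 t1 : ℝ} (h0 : 0 ≤ t0) (h1 : t1 ≤ 1) (h01 : t0 ≤ t1) :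
    IsCompact (Subtype.val ⁻¹' (Icc t0 t1) : Set ↥(Set.Icc (0:ℝ) 1)) ∧
    IsConnected (Subtype.val ⁻¹' (Icc t0 t1) : Set ↥(Set.Icc (0:ℝ) 1)) := by
  have hsub : Icc t0 t1 ⊆ Icc (0:ℝ) 1 := Icc_subset_Icc h0 h1
  exact ⟨isCompact_preimage_val isCompact_Icc hsub,
    isConnected_preimage_val (⟨⟨t0, le_refl _, h01⟩, isPreconnected_Icc⟩) hsub⟩

lemma arc_to_wilder (h : ArcConnectedSpace Y) : WilderSpace Y := by
  intro x y z hxy hyz hxz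
  obtain ⟨f, hfc, hfi, hf0, hf1⟩ := h x y hxy
  by_cases hz : z ∈ range f
  · obtain ⟨t, ht⟩ := hz
    have ht0 : t ≠ ⟨0, le_refl 0, zero_le_one⟩ := by
      intro h'
      rw [h'] at ht
      exact hxz (hf0.symm.trans ht)
    have ht1 : t ≠ ⟨1, zero_le_one, le_refl 1⟩ := by
      intro h'
      rw [h'] at ht
      exact hyz (hf1.symm.trans ht)
    have hseg := seg_compact_conn (le_refl (0:ℝ)) t.2.2 t.2.1
    set Sg : Set ↥(Set.Icc (0:ℝ) 1) := Subtype.val ⁻¹' (Icc (0:ℝ) (t:ℝ)) with hSg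
    refine ⟨f '' Sg, hseg.1.image hfc,
      ⟨⟨z, ⟨t, ⟨t.2.1, le_refl _⟩, ht⟩⟩, hseg.2.isPreconnected.image _ hfc.continuousOn⟩, ?_, ?_⟩
    · exact ⟨⟨0, le_refl 0, zero_le_one⟩, ⟨le_refl _, t.2.1⟩, hf0⟩
    · right
      constructor
      · exact ⟨t, ⟨t.2.1, le_refl _⟩, ht⟩
      · rintro ⟨u, hu, huy⟩
        have : u = ⟨1, zero_le_one, le_refl 1⟩ := hfi (by rw [huy, hf1])
        rw [this] at hu
        have h1t : (1:ℝ) ≤ (t:ℝ) := hu.2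
        have : t = ⟨1, zero_le_one, le_refl 1⟩ := Subtype.ext (le_antisymm t.2.2 h1t)
        exact ht1 this
  · refine ⟨range f, isCompact_range hfc, isConnected_range hfc, ⟨_, hf0⟩, ?_⟩
    left
    exact ⟨⟨_, hf1⟩, hz⟩

lemma arc_to_ds (h : ArcConnectedSpace Y) : DStarSpace Y := by
  intro A B hAc hAconn hAnt hBc hBconn hBnt hAB
  obtain ⟨a, ha⟩ := hAconn.nonempty
  obtain ⟨b, hb⟩ := hBconn.nonempty
  have hab : a ≠ b := fun h' => (disjoint_left.mp hAB) ha (h' ▸ hb)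
  obtain ⟨f, hfc, hfi, hf0, hf1⟩ := h a b hab
  -- last exit time from A
  set K : Set ↥(Set.Icc (0:ℝ) 1) := f ⁻¹' A with hK
  have hKcl : IsClosed K := hAc.isClosed.preimage hfc
  have hKne : K.Nonempty := ⟨⟨0, le_refl 0, zero_le_one⟩, by rw [mem_preimage, hf0]; exact ha⟩
  have hKc : IsCompact (Subtype.val '' K) :=
    ((hKcl.isCompact).image continuous_subtype_val)
  set t0 : ℝ := sSup (Subtype.val '' K) with ht0
  have ht0mem : t0 ∈ Subtype.val '' K := hKc.sSup_mem (hKne.image _)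
  obtain ⟨u0, hu0K, hu0⟩ := ht0mem
  have ht0ub : ∀ u ∈ K, (u : ℝ) ≤ t0 := fun u hu =>
    le_csSup hKc.bddAbove ⟨u, hu, rfl⟩
  have h00 : (0:ℝ) ≤ t0 := by rw [← hu0]; exact u0.2.1
  have ht0le1 : t0 ≤ 1 := by rw [← hu0]; exact u0.2.2
  -- first entry time into B after t0
  set K2 : Set ↥(Set.Icc (0:ℝ) 1) := f ⁻¹' B ∩ Subtype.val ⁻¹' (Icc t0 1) with hK2
  have hK2cl : IsClosed K2 :=
    (hBc.isClosed.preimage hfc).inter (isClosed_Icc.preimage continuous_subtype_val)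
  have hK2ne : K2.Nonempty :=
    ⟨⟨1, zero_le_one, le_refl 1⟩, by rw [mem_preimage, hf1]; exact hb, ht0le1, le_refl 1⟩
  have hK2c : IsCompact (Subtype.val '' K2) := (hK2cl.isCompact).image continuous_subtype_val
  set t1 : ℝ := sInf (Subtype.val '' K2) with ht1
  have ht1mem : t1 ∈ Subtype.val '' K2 := hK2c.sInf_mem (hK2ne.image _)
  obtain ⟨u1, hu1K, hu1⟩ := ht1mem
  have ht1lb : ∀ u ∈ K2, t1 ≤ (u : ℝ) := fun u hu => csInf_le hK2c.bddBelow ⟨u, hu, rfl⟩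
  have h01 : t0 ≤ t1 := by rw [← hu1]; exact hu1K.2.1
  have ht1le1 : t1 ≤ 1 := by rw [← hu1]; exact u1.2.2
  have hseg := seg_compact_conn h00 ht1le1 h01
  set Sg : Set ↥(Set.Icc (0:ℝ) 1) := Subtype.val ⁻¹' (Icc t0 t1) with hSg
  have hu0Sg : u0 ∈ Sg := by
    constructor
    · rw [hu0]
    · rw [hu0]; exact h01
  have hu1Sg : u1 ∈ Sg := by
    constructor
    · rw [hu1]; exact h01
    · rw [hu1]
  refine ⟨f '' Sg, hseg.1.image hfc,
    ⟨⟨f u0, ⟨u0, hu0Sg, rfl⟩⟩, hseg.2.isPreconnected.image _ hfc.continuousOn⟩,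
    ⟨f u0, hu0K, ⟨u0, hu0Sg, rfl⟩⟩, ⟨f u1, hu1K.1, ⟨u1, hu1Sg, rfl⟩⟩, ?_, ?_⟩
  · -- A \ C nonempty
    obtain ⟨a1, ha1, a2, ha2, ha12⟩ := hAnt
    have : ∃ a' ∈ A, a' ≠ f u0 := by
      by_cases h' : a1 = f u0
      · exact ⟨a2, ha2, fun h2 => ha12 (h'.trans h2.symm) ⟩
      · exact ⟨a1, ha1, h'⟩
    obtain ⟨a', ha', ha'ne⟩ := this
    refine ⟨a', ha', ?_⟩
    rintro ⟨u, hu, hua⟩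
    have huK : u ∈ K := by rw [hK, mem_preimage, hua]; exact ha'
    have : (u : ℝ) = t0 := le_antisymm (ht0ub u huK) hu.1
    have : u = u0 := Subtype.ext (by rw [this, hu0])
    exact ha'ne (by rw [← hua, this])
  · -- B \ C nonempty
    obtain ⟨b1, hb1, b2, hb2, hb12⟩ := hBnt
    have : ∃ b' ∈ B, b' ≠ f u1 := by
      by_cases h' : b1 = f u1
      · exact ⟨b2, hb2, fun h2 => hb12 (h'.trans h2.symm) ⟩
      · exact ⟨b1, hb1, h'⟩
    obtain ⟨b', hb', hb'ne⟩ := this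
    refine ⟨b', hb', ?_⟩
    rintro ⟨u, hu, hub⟩
    have huK2 : u ∈ K2 := by
      refine ⟨by rw [mem_preimage, hub]; exact hb', hu.1, u.2.2⟩
    have : (u : ℝ) = t1 := le_antisymm hu.2 (ht1lb u huK2)
    have : u = u1 := Subtype.ext (by rw [this, hu1])
    exact hb'ne (by rw [← hub, this])


end Seg8

end HWaux

/-- For a nondegenerate continuum `X` the following are equivalent:
(1) every nondegenerate subcontinuum of `X` is Wilder;
(2) every nondegenerate subcontinuum of `X` is D*;
(3) every nondegenerate subcontinuum of `X` is D**;
(4) every subcontinuum of `X` is arcwise connected. -/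
theorem hereditarily_wilder_tfae (X : Type*) [MetricSpace X] [CompactSpace X]
    [ConnectedSpace X] [Nontrivial X] :
    List.TFAE
      [∀ S : Set X, IsCompact S → IsConnected S → S.Nontrivial → WilderSpace ↥S,
       ∀ S : Set X, IsCompact S → IsConnected S → S.Nontrivial → DStarSpace ↥S,
       ∀ S : Set X, IsCompact S → IsConnected S → S.Nontrivial → DStarStarSpace ↥S,
       ∀ S : Set X, IsCompact S → IsConnected S → ArcConnectedSpace ↥S] := by
  tfae_have 1 → 3 := by
    intro h S hSc hSconn hSnt
    exact HWaux.wilder_to_dss (h S hSc hSconn hSnt)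
  tfae_have 2 → 3 := by
    intro h S hSc hSconn hSnt
    exact HWaux.ds_to_dss (h S hSc hSconn hSnt)
  tfae_have 4 → 1 := by
    intro h S hSc hSconn _
    exact HWaux.arc_to_wilder (h S hSc hSconn)
  tfae_have 4 → 2 := by
    intro h S hSc hSconn _
    exact HWaux.arc_to_ds (h S hSc hSconn)
  tfae_have 3 → 4 := by
    intro h S hSc hSconn x y hxy
    have hD : HWaux.HD X := h
    have hxyv : (x : X) ≠ (y : X) := fun h' => hxy (Subtype.ext h')
    obtain ⟨M, hMS, hM⟩ := HWaux.exists_irr hSc hSconn x.2 y.2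
    obtain ⟨s⟩ := HWaux.sides_nonempty hD hM hxyv
    obtain ⟨f, hfc, hfi, hf0, hf1⟩ := HWaux.arc_of_sides hM hxyv s hMS
    exact ⟨f, hfc, hfi, by rw [hf0], by rw [hf1]⟩
  tfae_finish
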